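/- For an integral domain D the following are equivalent: (i) D is a valuation domain; (ii) D is an integrally closed coherent t-local domain; (iii) D is an integrally closed finite conductor t-local domain. -/

import Mathlib

open scoped nonZeroDivisors

/-- The `t`-closure of a fractional ideal `E` of an integral domain `D`:
the union (here: supremum, which is a directed union) of `F^v = (F⁻¹)⁻¹` over all
nonzero finitely generated fractional subideals `F` of `E`, viewed as a
`D`-submodule of the fraction field of `D`. -/
noncomputable def tClos (D : Type*) [CommRing D] [IsDomain D]
    (E : FractionalIdeal D⁰ (FractionRing D)) : Submodule D (FractionRing D) :=
  ⨆ F ∈ {F : FractionalIdeal D⁰ (FractionRing D) |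
      F ≠ 0 ∧ F ≤ E ∧ (F : Submodule D (FractionRing D)).FG},
    (((F⁻¹)⁻¹ : FractionalIdeal D⁰ (FractionRing D)) : Submodule D (FractionRing D))

/-- An integral ideal `I` of an integral domain `D` is a `t`-ideal if `I = I^t`. -/
def Ideal.IsT {D : Type*} [CommRing D] [IsDomain D] (I : Ideal D) : Prop :=
  ((I : FractionalIdeal D⁰ (FractionRing D)) : Submodule D (FractionRing D)) = tClos D I

/-- An integral domain is `t`-local if it is local and its maximal ideal is a `t`-ideal. -/
def IsTLocal (A : Type*) [CommRing A] [IsDomain A] : Prop :=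
  ∃ h : IsLocalRing A, Ideal.IsT (@IsLocalRing.maximalIdeal A _ h)

section Aux

variable {D : Type*} [CommRing D] [IsDomain D]

open FractionalIdeal

private lemma coe_vv_le_tClos {E F : FractionalIdeal D⁰ (FractionRing D)} (hF0 : F ≠ 0)
    (hFE : F ≤ E) (hFG : (F : Submodule D (FractionRing D)).FG) :
    (((F⁻¹)⁻¹ : FractionalIdeal D⁰ (FractionRing D)) : Submodule D (FractionRing D)) ≤
      tClos D E :=
  le_iSup₂_of_le F ⟨hF0, hFE, hFG⟩ le_rfl

private lemma tClos_le {E : FractionalIdeal D⁰ (FractionRing D)}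
    {N : Submodule D (FractionRing D)}
    (h : ∀ F : FractionalIdeal D⁰ (FractionRing D), F ≠ 0 → F ≤ E →
      (F : Submodule D (FractionRing D)).FG →
      (((F⁻¹)⁻¹ : FractionalIdeal D⁰ (FractionRing D)) : Submodule D (FractionRing D)) ≤ N) :
    tClos D E ≤ N :=
  iSup₂_le fun F hF => h F hF.1 hF.2.1 hF.2.2

/-- Over a valuation domain, the span of any pair of elements of the fraction field is
equal to one of the two singleton spans. -/
private lemma span_pair_valuation [ValuationRing D] (x y : FractionRing D) :
    Submodule.span D {x} ⊔ Submodule.span D {y} = Submodule.span D {x} ∨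
      Submodule.span D {x} ⊔ Submodule.span D {y} = Submodule.span D {y} := by
  by_cases hx : x = 0
  · right; rw [hx, Submodule.span_zero_singleton]; simp
  by_cases hy : y = 0
  · left; rw [hy, Submodule.span_zero_singleton]; simp
  rcases ValuationRing.isInteger_or_isInteger D (y * x⁻¹) with ⟨c, hc⟩ | ⟨c, hc⟩
  · left
    rw [sup_eq_left, Submodule.span_le, Set.singleton_subset_iff]
    refine Submodule.mem_span_singleton.mpr ⟨c, ?_⟩
    rw [Algebra.smul_def, hc, mul_assoc, inv_mul_cancel₀ hx, mul_one]
  · right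
    rw [sup_eq_right, Submodule.span_le, Set.singleton_subset_iff]
    refine Submodule.mem_span_singleton.mpr ⟨c, ?_⟩
    rw [Algebra.smul_def, hc, mul_inv, inv_inv, mul_comm y⁻¹ x, mul_assoc,
      inv_mul_cancel₀ hy, mul_one]

/-- Over a valuation domain, a finitely generated fractional ideal is principal. -/
private lemma fg_spanSingleton [ValuationRing D] (F : FractionalIdeal D⁰ (FractionRing D))
    (hFG : (F : Submodule D (FractionRing D)).FG) :
    ∃ x : FractionRing D, F = spanSingleton D⁰ x := by
  obtain ⟨s, hs⟩ := hFG
  have key : ∀ s : Finset (FractionRing D), ∃ x : FractionRing D,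
      Submodule.span D (s : Set (FractionRing D)) = Submodule.span D {x} := by
    intro s
    classical
    induction s using Finset.induction_on with
    | empty => exact ⟨0, by rw [Finset.coe_empty, Submodule.span_empty,
        Submodule.span_zero_singleton]⟩
    | @insert a s ha ih =>
      obtain ⟨x, hx⟩ := ih
      rw [Finset.coe_insert, Submodule.span_insert, hx]
      rcases span_pair_valuation (D := D) a x with h | h
      · exact ⟨a, h⟩
      · exact ⟨x, h⟩
  obtain ⟨x, hx⟩ := key s
  refine ⟨x, coeToSubmodule_injective ?_⟩
  show (F : Submodule D (FractionRing D)) =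
    ((spanSingleton D⁰ x : FractionalIdeal D⁰ (FractionRing D)) : Submodule D (FractionRing D))
  rw [coe_spanSingleton, ← hx, hs]

/-- A valuation domain is `t`-local. -/
private lemma isTLocal_of_valuation [ValuationRing D] : IsTLocal D := by
  refine ⟨inferInstance, le_antisymm ?_ (tClos_le fun F hF0 hFM hFG => ?_)⟩
  · -- M ≤ tClos M
    intro x hx
    rw [FractionalIdeal.mem_coe] at hx
    by_cases hx0 : x = 0
    · exact hx0 ▸ (tClos D _).zero_mem
    have h1 : spanSingleton D⁰ x ≠ 0 := by
      rwa [Ne, spanSingleton_eq_zero_iff]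
    have h2 : spanSingleton D⁰ x ≤
        ((IsLocalRing.maximalIdeal D : Ideal D) : FractionalIdeal D⁰ (FractionRing D)) :=
      spanSingleton_le_iff_mem.mpr hx
    have h3 : ((spanSingleton D⁰ x : FractionalIdeal D⁰ (FractionRing D)) :
        Submodule D (FractionRing D)).FG := by
      rw [coe_spanSingleton]; exact Submodule.fg_span_singleton x
    refine coe_vv_le_tClos h1 h2 h3 ?_
    rw [spanSingleton_inv, spanSingleton_inv, inv_inv, FractionalIdeal.mem_coe]
    exact mem_spanSingleton_self D⁰ x
  · -- F^v ≤ M for F fg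
    obtain ⟨x, rfl⟩ := fg_spanSingleton F hFG
    rw [spanSingleton_inv, spanSingleton_inv, inv_inv]
    exact FractionalIdeal.coe_le_coe.mpr hFM

set_option maxHeartbeats 1600000 in
variable (D) in
/-- The heart of the equivalence: an integrally closed finite conductor `t`-local
domain is a valuation domain. -/
private lemma valuationRing_of_icfc (h1 : IsIntegrallyClosed D)
    (h2 : ∀ a b : D, (Ideal.span {a} ⊓ Ideal.span {b}).FG) (h3 : IsTLocal D) :
    ValuationRing D := by
  obtain ⟨hloc, hT⟩ := h3
  haveI := hloc
  rw [ValuationRing.iff_dvd_total]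
  constructor
  intro a b
  by_cases ha : a = 0
  · exact Or.inr ⟨0, by rw [ha, mul_zero]⟩
  by_cases hb : b = 0
  · exact Or.inl ⟨0, by rw [hb, mul_zero]⟩
  set K := FractionRing D
  set f : D →+* K := algebraMap D K with hf
  have hinj : Function.Injective f := IsFractionRing.injective D K
  have hfa : f a ≠ 0 := fun h => ha (hinj (by rw [h, _root_.map_zero]))
  have hfb : f b ≠ 0 := fun h => hb (hinj (by rw [h, _root_.map_zero]))
  set I : FractionalIdeal D⁰ K := spanSingleton D⁰ (f a) ⊔ spanSingleton D⁰ (f b) with hI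
  have hfaI : f a ∈ I := le_sup_left (α := FractionalIdeal D⁰ K)
    (mem_spanSingleton_self D⁰ (f a))
  have hfbI : f b ∈ I := le_sup_right (α := FractionalIdeal D⁰ K)
    (mem_spanSingleton_self D⁰ (f b))
  have hI0 : I ≠ 0 := fun h => hfa (by simpa [h] using hfaI)
  have hI1 : I ≤ 1 := sup_le (spanSingleton_le_iff_mem.mpr ((mem_one_iff D⁰).mpr ⟨a, rfl⟩))
    (spanSingleton_le_iff_mem.mpr ((mem_one_iff D⁰).mpr ⟨b, rfl⟩))
  have hIfg : (I : Submodule D K).FG := by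
    rw [hI, coe_sup, coe_spanSingleton, coe_spanSingleton]
    exact (Submodule.fg_span_singleton _).sup (Submodule.fg_span_singleton _)
  -- Step 1 : I⁻¹ is finitely generated (finite conductor + the formula
  -- I⁻¹ = (ab)⁻¹ • ((a) ⊓ (b)))
  have hJeq : I⁻¹ = spanSingleton D⁰ ((f a * f b)⁻¹) *
      ((Ideal.span {a} ⊓ Ideal.span {b} : Ideal D) : FractionalIdeal D⁰ K) := by
    apply le_antisymm
    · intro x hx
      replace hx : x ∈ I⁻¹ := hx
      show x ∈ spanSingleton D⁰ ((f a * f b)⁻¹) *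
        ((Ideal.span {a} ⊓ Ideal.span {b} : Ideal D) : FractionalIdeal D⁰ K)
      rw [mem_inv_iff hI0] at hx
      obtain ⟨c, hc⟩ := (mem_one_iff D⁰).mp (hx (f a) hfaI)
      obtain ⟨d, hd⟩ := (mem_one_iff D⁰).mp (hx (f b) hfbI)
      have hm : c * b ∈ Ideal.span {a} ⊓ Ideal.span {b} := by
        constructor
        · refine Ideal.mem_span_singleton'.mpr ⟨d, ?_⟩
          apply hinj
          rw [_root_.map_mul, _root_.map_mul, hd, hc]
          ring
        · exact Ideal.mem_span_singleton'.mpr ⟨c, rfl⟩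
      have hxeq : x = (f a * f b)⁻¹ * f (c * b) := by
        rw [_root_.map_mul, hc]
        rw [eq_inv_mul_iff_mul_eq₀ (mul_ne_zero hfa hfb)]
        ring
      rw [hxeq]
      exact mul_mem_mul (mem_spanSingleton_self D⁰ _)
        ((mem_coeIdeal D⁰).mpr ⟨c * b, hm, rfl⟩)
    · rw [mul_le]
      intro u hu v hv
      obtain ⟨z, hz⟩ := (mem_spanSingleton D⁰).mp hu
      obtain ⟨m, hm, hmv⟩ := (mem_coeIdeal D⁰).mp hv
      rw [mem_inv_iff hI0]
      intro y hy
      rw [hI, ← FractionalIdeal.mem_coe, coe_sup, coe_spanSingleton, coe_spanSingleton] at hy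
      -- the set of y with u * v * y ∈ 1 is a submodule, check on generators
      have key : ∀ t : K, t ∈ Submodule.span D {f a} ⊔ Submodule.span D {f b} →
          u * v * t ∈ (1 : FractionalIdeal D⁰ K) := by
        intro t ht
        rw [← Submodule.span_union] at ht
        refine Submodule.span_induction ?_ ?_ ?_ ?_ ht
        · rintro w (rfl | rfl)
          · -- w = f a
            obtain ⟨m₁, hm₁⟩ := Ideal.mem_span_singleton'.mp hm.2
            refine (mem_one_iff D⁰).mpr ⟨z * m₁, ?_⟩
            rw [← hz, ← hmv, ← hm₁]
            push_cast [Algebra.smul_def]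
            change f z * f m₁ = f z * (f a * f b)⁻¹ * (f m₁ * f b) * f a
            rw [show f z * (f a * f b)⁻¹ * (f m₁ * f b) * f a = f z * f m₁ * ((f a * f b)⁻¹ * (f a * f b)) by ring, inv_mul_cancel₀ (mul_ne_zero hfa hfb)]
            ring
          · -- w = f b
            obtain ⟨m₂, hm₂⟩ := Ideal.mem_span_singleton'.mp hm.1
            refine (mem_one_iff D⁰).mpr ⟨z * m₂, ?_⟩
            rw [← hz, ← hmv, ← hm₂]
            push_cast [Algebra.smul_def]
            change f z * f m₂ = f z * (f a * f b)⁻¹ * (f m₂ * f a) * f b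
            rw [show f z * (f a * f b)⁻¹ * (f m₂ * f a) * f b = f z * f m₂ * ((f a * f b)⁻¹ * (f a * f b)) by ring, inv_mul_cancel₀ (mul_ne_zero hfa hfb)]
            ring
        · rw [mul_zero]
          exact (mem_one_iff D⁰).mpr ⟨0, _root_.map_zero _⟩
        · intro w₁ w₂ _ _ h₁ h₂
          obtain ⟨c₁, hc₁⟩ := (mem_one_iff D⁰).mp h₁
          obtain ⟨c₂, hc₂⟩ := (mem_one_iff D⁰).mp h₂
          refine (mem_one_iff D⁰).mpr ⟨c₁ + c₂, ?_⟩
          rw [_root_.map_add, hc₁, hc₂, mul_add]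
        · intro r w _ hw
          obtain ⟨c, hc⟩ := (mem_one_iff D⁰).mp hw
          refine (mem_one_iff D⁰).mpr ⟨r * c, ?_⟩
          rw [_root_.map_mul, hc, Algebra.smul_def]
          ring
      exact key y (by simpa [Set.union_comm] using hy)
  have hJfg : ((I⁻¹ : FractionalIdeal D⁰ K) : Submodule D K).FG := by
    rw [hJeq, coe_mul, coe_spanSingleton]
    refine (Submodule.fg_span_singleton _).mul ?_
    rw [coe_coeIdeal]
    exact Submodule.FG.map _ (h2 a b)
  have hJ0 : (I⁻¹ : FractionalIdeal D⁰ K) ≠ 0 := by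
    have h1J : (1 : FractionalIdeal D⁰ K) ≤ I⁻¹ := by
      have := inv_anti_mono (R₁ := D) (K := K) hI0 one_ne_zero hI1
      rwa [inv_one] at this
    intro h
    rw [h] at h1J
    exact one_ne_zero (FractionalIdeal.le_zero_iff.mp h1J)
  have hII0 : I * I⁻¹ ≠ 0 := by
    intro h
    have : f a * 1 ∈ I * I⁻¹ := mul_mem_mul hfaI (by
      have h1J : (1 : FractionalIdeal D⁰ K) ≤ I⁻¹ := by
        have := inv_anti_mono (R₁ := D) (K := K) hI0 one_ne_zero hI1
        rwa [inv_one] at this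
      exact h1J (one_mem_one D⁰))
    rw [h] at this
    exact hfa (by simpa using this)
  have hII1 : I * I⁻¹ ≤ 1 := mul_le.mpr fun u hu v hv => mul_comm v u ▸ (mem_inv_iff hI0).mp hv u hu
  -- Step 2 : (I * I⁻¹)⁻¹ = 1, by integral closedness
  have hinv : (I * I⁻¹)⁻¹ = (1 : FractionalIdeal D⁰ K) := by
    apply le_antisymm
    · intro x hx
      replace hx : x ∈ (I * I⁻¹)⁻¹ := hx
      show x ∈ (1 : FractionalIdeal D⁰ K)
      rw [mem_inv_iff hII0] at hx
      have hsmul : ∀ n ∈ ((I⁻¹ : FractionalIdeal D⁰ K) : Submodule D K), x • n ∈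
          ((I⁻¹ : FractionalIdeal D⁰ K) : Submodule D K) := by
        intro n hn
        rw [FractionalIdeal.mem_coe] at hn ⊢
        rw [smul_eq_mul, mem_inv_iff hI0]
        intro w hw
        have := hx (w * n) (mul_mem_mul hw hn)
        rwa [show x * n * w = x * (w * n) by ring]
      have hint : IsIntegral D x := by
        refine isIntegral_of_smul_mem_submodule
          ((I⁻¹ : FractionalIdeal D⁰ K) : Submodule D K) ?_ hJfg x hsmul
        intro h
        apply hJ0
        apply coeToSubmodule_injective
        show ((I⁻¹ : FractionalIdeal D⁰ K) : Submodule D K) =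
          ((0 : FractionalIdeal D⁰ K) : Submodule D K)
        rw [h, coe_zero]
      obtain ⟨y, hy⟩ := IsIntegrallyClosed.isIntegral_iff.mp hint
      exact (mem_one_iff D⁰).mpr ⟨y, hy⟩
    · have := inv_anti_mono (R₁ := D) (K := K) hII0 one_ne_zero hII1
      rwa [inv_one] at this
  -- Step 3 : I * I⁻¹ = 1, using that the maximal ideal is a t-ideal
  have hfgII : ((I * I⁻¹ : FractionalIdeal D⁰ K) : Submodule D K).FG := by
    rw [coe_mul]; exact hIfg.mul hJfg
  obtain ⟨h₀, hh₀⟩ := le_one_iff_exists_coeIdeal.mp hII1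
  have hh0top : h₀ = ⊤ := by
    by_contra hne
    have hle : (h₀ : FractionalIdeal D⁰ K) ≤
        ((IsLocalRing.maximalIdeal D : Ideal D) : FractionalIdeal D⁰ K) :=
      (coeIdeal_le_coeIdeal K).mpr (IsLocalRing.le_maximalIdeal hne)
    rw [hh₀] at hle
    have hmem : (1 : K) ∈ tClos D ((IsLocalRing.maximalIdeal D : Ideal D) :
        FractionalIdeal D⁰ K) := by
      refine coe_vv_le_tClos hII0 hle hfgII ?_
      rw [hinv, inv_one, FractionalIdeal.mem_coe]
      exact one_mem_one D⁰
    rw [← hT, FractionalIdeal.mem_coe] at hmem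
    obtain ⟨m, hm, hm1⟩ := (mem_coeIdeal D⁰).mp hmem
    have : m = 1 := hinj (by rw [hm1, _root_.map_one])
    rw [this] at hm
    exact (IsLocalRing.maximalIdeal.isMaximal D).ne_top (Ideal.eq_top_iff_one _ |>.mpr hm)
  have hII : I * I⁻¹ = 1 := by rw [← hh₀, hh0top, coeIdeal_top]
  -- Step 4 : extract 1 = a p + b q and use locality
  have hone : (1 : K) ∈ ((I * I⁻¹ : FractionalIdeal D⁰ K) : Submodule D K) := by
    rw [hII]
    exact FractionalIdeal.mem_coe.mpr (one_mem_one D⁰)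
  rw [coe_mul, hI, coe_sup, coe_spanSingleton, coe_spanSingleton, Submodule.sup_mul] at hone
  obtain ⟨u, hu, v, hv, huv⟩ := Submodule.mem_sup.mp hone
  obtain ⟨p, hp, hpu⟩ := Submodule.mem_span_singleton_mul.mp hu
  obtain ⟨q, hq, hqv⟩ := Submodule.mem_span_singleton_mul.mp hv
  rw [FractionalIdeal.mem_coe] at hp hq
  obtain ⟨p', hp'⟩ := (mem_one_iff D⁰).mp ((mem_inv_iff hI0).mp hp (f a) hfaI)
  obtain ⟨q', hq'⟩ := (mem_one_iff D⁰).mp ((mem_inv_iff hI0).mp hq (f b) hfbI)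
  have hsum : p' + q' = 1 := by
    apply hinj
    rw [_root_.map_add, _root_.map_one, hp', hq', mul_comm p (f a), mul_comm q (f b), hpu, hqv, huv]
  rcases IsLocalRing.isUnit_or_isUnit_of_add_one hsum with hu' | hu'
  · -- p' = a * p is a unit ; show a ∣ b
    left
    obtain ⟨w, hw⟩ := (mem_one_iff D⁰).mp ((mem_inv_iff hI0).mp hp (f b) hfbI)
    have : a ∣ b * p' := by
      refine ⟨w, hinj ?_⟩
      rw [_root_.map_mul, _root_.map_mul, hp', hw]
      ring
    exact (hu'.dvd_mul_right).mp this
  · -- q' = b * q is a unit ; show b ∣ a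
    right
    obtain ⟨w, hw⟩ := (mem_one_iff D⁰).mp ((mem_inv_iff hI0).mp hq (f a) hfaI)
    have : b ∣ a * q' := by
      refine ⟨w, hinj ?_⟩
      rw [_root_.map_mul, _root_.map_mul, hq', hw]
      ring
    exact (hu'.dvd_mul_right).mp this

end Aux

/-- For an integral domain `D` the following are equivalent:
(i) `D` is a valuation domain;
(ii) `D` is an integrally closed coherent `t`-local domain (coherent: the intersection
of any two finitely generated ideals is finitely generated);
(iii) `D` is an integrally closed finite conductor `t`-local domain (finite conductor:
the intersection of any two principal ideals is finitely generated). -/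
theorem valuation_iff_integrally_closed_coherent_t_local (D : Type*) [CommRing D]
    [IsDomain D] :
    List.TFAE
      [ ValuationRing D,
        IsIntegrallyClosed D ∧
          (∀ I J : Ideal D, I.FG → J.FG → (I ⊓ J).FG) ∧ IsTLocal D,
        IsIntegrallyClosed D ∧
          (∀ a b : D, (Ideal.span {a} ⊓ Ideal.span {b}).FG) ∧ IsTLocal D ] := by
  tfae_have 1 → 2 := by
    intro h
    refine ⟨inferInstance, fun I J hI hJ => ?_, isTLocal_of_valuation⟩
    rcases (ValuationRing.le_total_ideal (A := D)).total I J with hle | hle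
    · rwa [inf_eq_left.mpr hle]
    · rwa [inf_eq_right.mpr hle]
  tfae_have 2 → 3 := by
    rintro ⟨h1, h2, h3⟩
    exact ⟨h1, fun a b => h2 _ _ (Submodule.fg_span_singleton a)
      (Submodule.fg_span_singleton b), h3⟩
  tfae_have 3 → 1 := by
    rintro ⟨h1, h2, h3⟩
    exact valuationRing_of_icfc D h1 h2 h3
  tfae_finish
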